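/- arXiv:2601.00272 — 2 statements merged into one kernel-verified Lean document; each statement's English description precedes it below -/
import Mathlib

section
/- Let c ≥ 1 and t > 0 be reals with c·t < 1. Then log(1 − t) / log(1 − c·t) ≤ 1/c. -/
/-- **The LSH exponent bound.**
For reals `c ≥ 1` and `t > 0` with `c·t < 1`, we have
`log(1 − t) / log(1 − c·t) ≤ 1/c`, where `log` is the natural logarithm. -/
theorem log_ratio_le_inv
    (c t : ℝ) (hc : 1 ≤ c) (ht : 0 < t) (hct : c * t < 1) :
    Real.log (1 - t) / Real.log (1 - c * t) ≤ 1 / c := by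
  have hc0 : (0:ℝ) < c := lt_of_lt_of_le one_pos hc
  have ht1 : t < 1 := by nlinarith
  have h1t : (0:ℝ) < 1 - t := by linarith
  have h1ct : (0:ℝ) < 1 - c * t := by linarith
  -- Bernoulli: 1 - c*t ≤ (1 - t)^c
  have hb : 1 - c * t ≤ (1 - t) ^ c := by
    have := one_add_mul_self_le_rpow_one_add (s := -t) (by linarith) hc
    simpa [mul_comm, sub_eq_add_neg, mul_neg] using this
  have hlog : Real.log (1 - c * t) ≤ c * Real.log (1 - t) := by
    calc Real.log (1 - c * t) ≤ Real.log ((1 - t) ^ c) :=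
          Real.log_le_log h1ct hb
      _ = c * Real.log (1 - t) := Real.log_rpow h1t _
  have hA : Real.log (1 - t) < 0 := Real.log_neg h1t (by linarith)
  have hB : Real.log (1 - c * t) < 0 := Real.log_neg h1ct (by nlinarith)
  rw [div_le_iff_of_neg hB]
  calc 1 / c * Real.log (1 - c * t) ≤ 1 / c * (c * Real.log (1 - t)) := by
        apply mul_le_mul_of_nonneg_left hlog (by positivity)
    _ = Real.log (1 - t) := by field_simp
end

section
/- There exist constants C > 0 and c_0 > e^e such that for every real c ≥ c_0, the quantity β(c) = min over positive integers k of max{ 1/(2·c^{1/k} − 1), 1/k } satisfies β(c) ≤ C · (ln ln c)/(ln c). -/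
/-- **Asymptotics of the concentric-annuli exponent for the Hamming cube.**
Let `β(c) = min_{k ≥ 1} max{1/(2·c^(1/k) − 1), 1/k}`. There are constants
`C > 0` and `c₀ > e^e` such that `β(c) ≤ C·(ln ln c)/(ln c)` for all `c ≥ c₀`. -/
theorem beta_asymptotics :
    ∃ C > (0 : ℝ), ∃ c₀ > Real.exp (Real.exp 1), ∀ c : ℝ, c₀ ≤ c →
      (⨅ k : {k : ℕ // 0 < k},
          max (1 / (2 * c ^ ((1 : ℝ) / ((k : ℕ) : ℝ)) - 1)) (1 / ((k : ℕ) : ℝ)))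
        ≤ C * Real.log (Real.log c) / Real.log c := by
  refine ⟨2, by norm_num, Real.exp (Real.exp 4), ?_, ?_⟩
  · exact Real.exp_lt_exp.mpr (Real.exp_lt_exp.mpr (by norm_num))
  intro c hc
  have he1 : (2:ℝ) ≤ Real.exp 1 := by
    have := Real.add_one_le_exp (1:ℝ); linarith
  have he4 : (16:ℝ) ≤ Real.exp 4 := by
    have h4 : Real.exp 4 = Real.exp 1 ^ 4 := by
      rw [← Real.exp_nat_mul]; norm_num
    have h5 : (2:ℝ)^4 ≤ Real.exp 1 ^ 4 := pow_le_pow_left₀ (by norm_num) he1 4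
    rw [h4]; linarith [h5]
  have hc0 : (0:ℝ) < c := lt_of_lt_of_le (Real.exp_pos _) hc
  set L := Real.log c with hLdef
  have hL : Real.exp 4 ≤ L := by
    show Real.exp 4 ≤ Real.log c
    exact (Real.le_log_iff_exp_le hc0).mpr hc
  have hL16 : (16:ℝ) ≤ L := le_trans he4 hL
  have hL0 : (0:ℝ) < L := by linarith
  set M := Real.log L with hMdef
  have hM1 : (1:ℝ) ≤ M := by
    show (1:ℝ) ≤ Real.log L
    exact (Real.le_log_iff_exp_le hL0).mpr (le_trans (Real.exp_le_exp.mpr (by norm_num)) hL)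
  have hM0 : (0:ℝ) < M := by linarith
  -- 2M ≤ L via sqrt trick
  have hsq : (4:ℝ) ≤ Real.sqrt L := by
    have : Real.sqrt 16 ≤ Real.sqrt L := Real.sqrt_le_sqrt hL16
    have h16 : Real.sqrt 16 = 4 := by
      rw [show (16:ℝ) = 4^2 by norm_num, Real.sqrt_sq (by norm_num)]
    linarith
  have hML : 2 * M ≤ L := by
    have hlogs : Real.log (Real.sqrt L) = M / 2 := by
      rw [hMdef, Real.log_sqrt hL0.le]
    have h1 : Real.log (Real.sqrt L) ≤ Real.sqrt L - 1 :=
      Real.log_le_sub_one_of_pos (by positivity)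
    have h2 : Real.sqrt L * Real.sqrt L = L := Real.mul_self_sqrt hL0.le
    nlinarith
  set x := L / (2 * M) with hxdef
  have hx0 : (0:ℝ) < x := by positivity
  have hx1 : (1:ℝ) ≤ x := (one_le_div (by positivity)).mpr hML
  set k₀ : ℕ := ⌈x⌉₊ with hkdef
  have hk : 0 < k₀ := Nat.ceil_pos.mpr hx0
  have hk' : (0:ℝ) < (k₀:ℝ) := by exact_mod_cast hk
  have hkx : x ≤ (k₀:ℝ) := Nat.le_ceil x
  have hkup : (k₀:ℝ) ≤ L / M := by
    have := Nat.ceil_lt_add_one hx0.le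
    have hxx : x + 1 ≤ L / M := by
      have : x + x = L / M := by
        rw [hxdef]
        field_simp
        ring
      linarith
    linarith
  have hbdd : BddBelow (Set.range fun k : {k : ℕ // 0 < k} =>
      max (1 / (2 * c ^ ((1 : ℝ) / ((k : ℕ) : ℝ)) - 1)) (1 / ((k : ℕ) : ℝ))) := by
    refine ⟨0, ?_⟩
    rintro y ⟨k, rfl⟩
    exact le_trans (by positivity) (le_max_right _ _)
  refine le_trans (ciInf_le hbdd ⟨k₀, hk⟩) ?_
  have hLM : M ≤ L / (k₀:ℝ) := by
    rw [le_div_iff₀ hk']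
    calc M * (k₀:ℝ) ≤ M * (L / M) := by
          exact mul_le_mul_of_nonneg_left hkup hM0.le
      _ = L := by field_simp
  have hck : L ≤ c ^ ((1:ℝ) / (k₀:ℝ)) := by
    rw [Real.rpow_def_of_pos hc0]
    have : L = Real.exp M := (Real.exp_log hL0).symm
    rw [this]
    apply Real.exp_le_exp.mpr
    calc M ≤ L / (k₀:ℝ) := hLM
      _ = Real.log c * ((1:ℝ) / (k₀:ℝ)) := by rw [← hLdef]; ring
  apply max_le
  · have h1 : L ≤ 2 * c ^ ((1:ℝ) / (k₀:ℝ)) - 1 := by nlinarith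
    have h2 : 1 / (2 * c ^ ((1:ℝ) / (k₀:ℝ)) - 1) ≤ 1 / L :=
      one_div_le_one_div_of_le hL0 h1
    calc 1 / (2 * c ^ ((1:ℝ) / (k₀:ℝ)) - 1) ≤ 1 / L := h2
      _ ≤ 2 * M / L := by
          gcongr
          linarith
      _ = 2 * Real.log (Real.log c) / Real.log c := by rw [← hLdef, ← hMdef]
  · calc 1 / (k₀:ℝ) ≤ 1 / x := one_div_le_one_div_of_le hx0 hkx
      _ = 2 * M / L := by rw [hxdef]; rw [one_div_div]
      _ = 2 * Real.log (Real.log c) / Real.log c := by rw [← hLdef, ← hMdef]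
end
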